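/- The map V ↦ N^{-1} log I_N(θ, A + V B V*) is Lipschitz on the set of N×N contractions: for W, W̃ with W W* ≤ I and W̃ W̃* ≤ I, |N^{-1} log I_N(θ, A + W B W*) − N^{-1} log I_N(θ, A + W̃ B W̃*)| ≤ 2θ‖B‖_∞ (Σ_{i,j}|w_{ij} − w̃_{ij}|²)^{1/2}, where I_N(θ,E) = ∫ e^{θ N (UEU*)_{11}} dm_N^{(1)}(U). -/

import Mathlib

open MeasureTheory Real Matrix

instance matrixMeasurableSpace (N : ℕ) : MeasurableSpace (Matrix (Fin N) (Fin N) ℝ) :=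
  borel _

instance matrixBorelSpace (N : ℕ) : BorelSpace (Matrix (Fin N) (Fin N) ℝ) := ⟨rfl⟩

section aux

variable {N : ℕ}

/-- Cauchy–Schwarz with absolute value and square roots. -/
lemma aux_cs_abs (f g : Fin N → ℝ) :
    |∑ i, f i * g i| ≤ Real.sqrt (∑ i, f i ^ 2) * Real.sqrt (∑ i, g i ^ 2) := by
  have h := Finset.sum_mul_sq_le_sq_mul_sq Finset.univ f g
  calc |∑ i, f i * g i| = Real.sqrt ((∑ i, f i * g i) ^ 2) := (Real.sqrt_sq_eq_abs _).symm
    _ ≤ Real.sqrt ((∑ i, f i ^ 2) * ∑ i, g i ^ 2) := Real.sqrt_le_sqrt h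
    _ = _ := Real.sqrt_mul (Finset.sum_nonneg fun i _ => sq_nonneg _) _

lemma aux_dot_abs (x y : Fin N → ℝ) :
    |x ⬝ᵥ y| ≤ Real.sqrt (∑ i, x i ^ 2) * Real.sqrt (∑ i, y i ^ 2) := by
  simpa [dotProduct] using aux_cs_abs x y

/-- `‖Dᵀ v‖ ≤ ‖D‖_F` for a unit vector `v`. -/
lemma aux_transpose_mulVec_le (D : Matrix (Fin N) (Fin N) ℝ) (v : Fin N → ℝ)
    (hv : ∑ i, v i ^ 2 = 1) :
    Real.sqrt (∑ j, (Dᵀ *ᵥ v) j ^ 2) ≤ Real.sqrt (∑ i, ∑ j, (D i j) ^ 2) := by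
  apply Real.sqrt_le_sqrt
  calc ∑ j, (Dᵀ *ᵥ v) j ^ 2 ≤ ∑ j, ∑ i, (D i j) ^ 2 := by
        refine Finset.sum_le_sum fun j _ => ?_
        have hDv : (Dᵀ *ᵥ v) j = ∑ i, v i * D i j := by
          simp [Matrix.mulVec, dotProduct, Matrix.transpose_apply, mul_comm]
        rw [hDv]
        calc (∑ i, v i * D i j) ^ 2 ≤ (∑ i, v i ^ 2) * ∑ i, (D i j) ^ 2 :=
              Finset.sum_mul_sq_le_sq_mul_sq Finset.univ v fun i => D i j
          _ = ∑ i, (D i j) ^ 2 := by rw [hv, one_mul]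
    _ = ∑ i, ∑ j, (D i j) ^ 2 := Finset.sum_comm

/-- `‖Wᵀ v‖ ≤ 1` for a contraction `W` and unit vector `v`. -/
lemma aux_contraction_mulVec_le (W : Matrix (Fin N) (Fin N) ℝ)
    (hW : (1 - W * Wᵀ).PosSemidef) (v : Fin N → ℝ) (hv : ∑ i, v i ^ 2 = 1) :
    Real.sqrt (∑ j, (Wᵀ *ᵥ v) j ^ 2) ≤ 1 := by
  have h := hW.dotProduct_mulVec_nonneg v
  have hsv : star v = v := by simp
  rw [hsv, sub_mulVec, dotProduct_sub, one_mulVec] at h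
  have hvv : v ⬝ᵥ v = 1 := by
    simpa [dotProduct, sq] using hv
  have hq : v ⬝ᵥ ((W * Wᵀ) *ᵥ v) = ∑ j, (Wᵀ *ᵥ v) j ^ 2 := by
    rw [← Matrix.mulVec_mulVec, Matrix.dotProduct_mulVec, ← Matrix.mulVec_transpose]
    simp [dotProduct, sq]
  rw [hvv, hq] at h
  have h1 : ∑ j, (Wᵀ *ᵥ v) j ^ 2 ≤ 1 := by linarith
  calc Real.sqrt (∑ j, (Wᵀ *ᵥ v) j ^ 2) ≤ Real.sqrt 1 := Real.sqrt_le_sqrt h1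
    _ = 1 := Real.sqrt_one

/-- The key pointwise quadratic-form bound. -/
lemma aux_key_bound (b : ℝ) (hb : 0 ≤ b) (B W W' : Matrix (Fin N) (Fin N) ℝ)
    (hBnorm : ∀ x : Fin N → ℝ,
      Real.sqrt (∑ i, (B.mulVec x i) ^ 2) ≤ b * Real.sqrt (∑ i, (x i) ^ 2))
    (hW : (1 - W * Wᵀ).PosSemidef) (hW' : (1 - W' * W'ᵀ).PosSemidef)
    (v : Fin N → ℝ) (hv : ∑ i, v i ^ 2 = 1) :
    |v ⬝ᵥ ((W * B * Wᵀ - W' * B * W'ᵀ) *ᵥ v)|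
      ≤ 2 * b * Real.sqrt (∑ i, ∑ j, (W i j - W' i j) ^ 2) := by
  set D := W - W' with hD
  set s := Real.sqrt (∑ i, ∑ j, (W i j - W' i j) ^ 2) with hs
  have hs0 : 0 ≤ s := Real.sqrt_nonneg _
  have hsD : Real.sqrt (∑ i, ∑ j, (D i j) ^ 2) = s := by
    simp [hs, hD, Matrix.sub_apply]
  have hsplit : W * B * Wᵀ - W' * B * W'ᵀ = D * B * Wᵀ + W' * B * Dᵀ := by
    rw [hD, Matrix.transpose_sub]; noncomm_ring
  rw [hsplit, Matrix.add_mulVec, dotProduct_add]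
  refine le_trans (abs_add_le _ _) ?_
  -- norms of the relevant vectors
  have hDv : Real.sqrt (∑ j, (Dᵀ *ᵥ v) j ^ 2) ≤ s := by
    rw [← hsD]; exact aux_transpose_mulVec_le D v hv
  have hWv : Real.sqrt (∑ j, (Wᵀ *ᵥ v) j ^ 2) ≤ 1 := aux_contraction_mulVec_le W hW v hv
  have hW'v : Real.sqrt (∑ j, (W'ᵀ *ᵥ v) j ^ 2) ≤ 1 := aux_contraction_mulVec_le W' hW' v hv
  have hterm1 : |v ⬝ᵥ ((D * B * Wᵀ) *ᵥ v)| ≤ b * s := by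
    have he : (D * B * Wᵀ) *ᵥ v = D *ᵥ (B *ᵥ (Wᵀ *ᵥ v)) := by
      rw [← Matrix.mulVec_mulVec, ← Matrix.mulVec_mulVec]
    rw [he, Matrix.dotProduct_mulVec, ← Matrix.mulVec_transpose]
    refine le_trans (aux_dot_abs _ _) ?_
    have hB1 : Real.sqrt (∑ i, (B *ᵥ (Wᵀ *ᵥ v)) i ^ 2) ≤ b := by
      calc Real.sqrt (∑ i, (B *ᵥ (Wᵀ *ᵥ v)) i ^ 2)
          ≤ b * Real.sqrt (∑ i, ((Wᵀ *ᵥ v) i) ^ 2) := hBnorm _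
        _ ≤ b * 1 := by exact mul_le_mul_of_nonneg_left hWv hb
        _ = b := mul_one b
    calc Real.sqrt (∑ i, (Dᵀ *ᵥ v) i ^ 2) * Real.sqrt (∑ i, (B *ᵥ (Wᵀ *ᵥ v)) i ^ 2)
        ≤ s * b := mul_le_mul hDv hB1 (Real.sqrt_nonneg _) hs0
      _ = b * s := mul_comm s b
  have hterm2 : |v ⬝ᵥ ((W' * B * Dᵀ) *ᵥ v)| ≤ b * s := by
    have he : (W' * B * Dᵀ) *ᵥ v = W' *ᵥ (B *ᵥ (Dᵀ *ᵥ v)) := by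
      rw [← Matrix.mulVec_mulVec, ← Matrix.mulVec_mulVec]
    rw [he, Matrix.dotProduct_mulVec, ← Matrix.mulVec_transpose]
    refine le_trans (aux_dot_abs _ _) ?_
    have hB1 : Real.sqrt (∑ i, (B *ᵥ (Dᵀ *ᵥ v)) i ^ 2) ≤ b * s := by
      calc Real.sqrt (∑ i, (B *ᵥ (Dᵀ *ᵥ v)) i ^ 2)
          ≤ b * Real.sqrt (∑ i, ((Dᵀ *ᵥ v) i) ^ 2) := hBnorm _
        _ ≤ b * s := mul_le_mul_of_nonneg_left hDv hb
    calc Real.sqrt (∑ i, (W'ᵀ *ᵥ v) i ^ 2) * Real.sqrt (∑ i, (B *ᵥ (Dᵀ *ᵥ v)) i ^ 2)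
        ≤ 1 * (b * s) := mul_le_mul hW'v hB1 (Real.sqrt_nonneg _) zero_le_one
      _ = b * s := one_mul _
  linarith

/-- Quadratic-form entry as a dot product. -/
lemma aux_quad_entry [NeZero N] (M E : Matrix (Fin N) (Fin N) ℝ) :
    (M * E * star M) 0 0 = (M 0) ⬝ᵥ (E *ᵥ (M 0)) := by
  have : star M = Mᴴ := rfl
  rw [this]
  simp only [Matrix.mul_apply, Matrix.conjTranspose_apply, star_trivial,
    dotProduct, Matrix.mulVec, Finset.sum_mul, Finset.mul_sum]
  rw [Finset.sum_comm]
  exact Finset.sum_congr rfl fun j _ => Finset.sum_congr rfl fun k _ => by ring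

/-- A crude bound on a quadratic form with unit-bounded vector entries. -/
lemma aux_quad_bound (E : Matrix (Fin N) (Fin N) ℝ) (v : Fin N → ℝ)
    (hv : ∀ j, |v j| ≤ 1) :
    |v ⬝ᵥ (E *ᵥ v)| ≤ ∑ j, ∑ k, |E j k| := by
  simp only [dotProduct, Matrix.mulVec]
  refine le_trans (Finset.abs_sum_le_sum_abs _ _) (Finset.sum_le_sum fun j _ => ?_)
  rw [abs_mul]
  calc |v j| * |∑ k, E j k * v k| ≤ 1 * |∑ k, E j k * v k| :=
        mul_le_mul_of_nonneg_right (hv j) (abs_nonneg _)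
    _ = |∑ k, E j k * v k| := one_mul _
    _ ≤ ∑ k, |E j k * v k| := Finset.abs_sum_le_sum_abs _ _
    _ ≤ ∑ k, |E j k| := Finset.sum_le_sum fun k _ => by
        rw [abs_mul]
        calc |E j k| * |v k| ≤ |E j k| * 1 :=
              mul_le_mul_of_nonneg_left (hv k) (abs_nonneg _)
          _ = |E j k| := mul_one _

/-- Rows of orthogonal matrices are unit vectors. -/
lemma aux_row_unit [NeZero N] (U : Matrix.orthogonalGroup (Fin N) ℝ) :
    ∑ j, ((U : Matrix (Fin N) (Fin N) ℝ) 0 j) ^ 2 = 1 := by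
  have hU : (U : Matrix (Fin N) (Fin N) ℝ) * star (U : Matrix (Fin N) (Fin N) ℝ) = 1 :=
    (Unitary.mem_iff.mp U.2).2
  have h00 := congrFun (congrFun hU 0) 0
  have : star (U : Matrix (Fin N) (Fin N) ℝ) = (U : Matrix (Fin N) (Fin N) ℝ)ᴴ := rfl
  rw [this] at h00
  simp only [Matrix.mul_apply, Matrix.conjTranspose_apply, star_trivial,
    Matrix.one_apply_eq] at h00
  simpa [sq] using h00

/-- Measurability of the integrand entry map. -/
lemma aux_measurable_entry (E : Matrix (Fin N) (Fin N) ℝ) [NeZero N] :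
    Measurable (fun U : Matrix.orthogonalGroup (Fin N) ℝ =>
      ((U : Matrix (Fin N) (Fin N) ℝ) * E * star (U : Matrix (Fin N) (Fin N) ℝ)) 0 0) := by
  have h1 : Continuous (fun M : Matrix (Fin N) (Fin N) ℝ => M * E * star M) :=
    (continuous_id.matrix_mul continuous_const).matrix_mul continuous_id.matrix_conjTranspose
  have h2 : Continuous (fun M : Matrix (Fin N) (Fin N) ℝ => (M * E * star M) 0 0) :=
    (continuous_apply (0 : Fin N)).comp ((continuous_apply (0 : Fin N)).comp h1)
  exact h2.measurable.comp measurable_subtype_coe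

/-- Integrability of exponentials of bounded measurable functions. -/
lemma aux_integrable_exp {α : Type*} [MeasurableSpace α] (μ : Measure α) [IsFiniteMeasure μ]
    (f : α → ℝ) (hf : Measurable f) (M : ℝ) (hM : ∀ x, |f x| ≤ M) :
    Integrable (fun x => Real.exp (f x)) μ := by
  refine ⟨(Real.measurable_exp.comp hf).aestronglyMeasurable, ?_⟩
  apply MeasureTheory.HasFiniteIntegral.of_bounded (C := Real.exp M)
  filter_upwards with x
  rw [Real.norm_eq_abs, abs_of_pos (Real.exp_pos _)]
  exact Real.exp_le_exp.mpr (le_trans (le_abs_self _) (hM x))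

/-- Lipschitz property of `log ∫ exp` under uniform perturbation. -/
lemma aux_log_integral_exp {α : Type*} [MeasurableSpace α] (μ : Measure α)
    [IsProbabilityMeasure μ] (f g : α → ℝ)
    (hf : Integrable (fun x => Real.exp (f x)) μ)
    (hg : Integrable (fun x => Real.exp (g x)) μ) (c : ℝ)
    (h : ∀ x, |f x - g x| ≤ c) :
    |Real.log (∫ x, Real.exp (f x) ∂μ) - Real.log (∫ x, Real.exp (g x) ∂μ)| ≤ c := by
  have key : ∀ (f g : α → ℝ), Integrable (fun x => Real.exp (f x)) μ →
      Integrable (fun x => Real.exp (g x)) μ → (∀ x, f x - g x ≤ c) →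
      Real.log (∫ x, Real.exp (f x) ∂μ) - Real.log (∫ x, Real.exp (g x) ∂μ) ≤ c := by
    intro f g hf hg hle
    have hfp : 0 < ∫ x, Real.exp (f x) ∂μ := integral_exp_pos hf
    have hgp : 0 < ∫ x, Real.exp (g x) ∂μ := integral_exp_pos hg
    have h1 : ∫ x, Real.exp (f x) ∂μ ≤ ∫ x, Real.exp c * Real.exp (g x) ∂μ := by
      refine integral_mono hf (hg.const_mul _) fun x => ?_
      rw [← Real.exp_add]
      exact Real.exp_le_exp.mpr (by linarith [hle x])
    rw [MeasureTheory.integral_const_mul] at h1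
    have h2 : Real.log (∫ x, Real.exp (f x) ∂μ)
        ≤ Real.log (Real.exp c * ∫ x, Real.exp (g x) ∂μ) :=
      (Real.log_le_log_iff hfp (by positivity)).mpr h1
    rw [Real.log_mul (Real.exp_ne_zero c) (ne_of_gt hgp), Real.log_exp] at h2
    linarith
  refine abs_sub_le_iff.mpr ⟨key f g hf hg fun x => ?_, key g f hg hf fun x => ?_⟩
  · linarith [(abs_le.mp (h x)).2]
  · linarith [(abs_le.mp (h x)).1]

end aux

/-- The map `V ↦ N⁻¹ log I_N(θ, A + V B V*)` is Lipschitz on the set of `N×N`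
contractions: for `W, W̃` with `W W* ≤ I` and `W̃ W̃* ≤ I`,
`|N⁻¹ log I_N(θ, A + W B Wᵀ) − N⁻¹ log I_N(θ, A + W̃ B W̃ᵀ)|
   ≤ 2θ‖B‖_∞ (Σ_{i,j} |w_{ij} − w̃_{ij}|²)^{1/2}`,
where `I_N(θ,E) = ∫ e^{θ N (UEU*)_{11}} dm_N^{(1)}(U)` and `m_N^{(1)}` is the
Haar (probability) measure on `O(N)`; `‖B‖_∞ ≤ b` is the operator norm. -/
theorem spherical_integral_lipschitz_in_contraction
    (N : ℕ) [NeZero N]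
    (m : Measure (Matrix.orthogonalGroup (Fin N) ℝ)) [IsProbabilityMeasure m]
    (θ b : ℝ) (hθ : 0 < θ) (hb : 0 ≤ b)
    (A B : Matrix (Fin N) (Fin N) ℝ) (hA : A.IsHermitian) (hB : B.IsHermitian)
    (hBnorm : ∀ x : Fin N → ℝ,
      Real.sqrt (∑ i, (B.mulVec x i) ^ 2) ≤ b * Real.sqrt (∑ i, (x i) ^ 2))
    (W W' : Matrix (Fin N) (Fin N) ℝ)
    (hW : (1 - W * Wᵀ).PosSemidef) (hW' : (1 - W' * W'ᵀ).PosSemidef) :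
    |(1 / (N : ℝ)) * Real.log (∫ U, Real.exp (θ * (N : ℝ) *
          (((U : Matrix (Fin N) (Fin N) ℝ) * (A + W * B * Wᵀ) *
            star (U : Matrix (Fin N) (Fin N) ℝ)) 0 0)) ∂m)
      - (1 / (N : ℝ)) * Real.log (∫ U, Real.exp (θ * (N : ℝ) *
          (((U : Matrix (Fin N) (Fin N) ℝ) * (A + W' * B * W'ᵀ) *
            star (U : Matrix (Fin N) (Fin N) ℝ)) 0 0)) ∂m)|
      ≤ 2 * θ * b * Real.sqrt (∑ i, ∑ j, (W i j - W' i j) ^ 2) := by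
  set E₁ := A + W * B * Wᵀ with hE₁
  set E₂ := A + W' * B * W'ᵀ with hE₂
  set s := Real.sqrt (∑ i, ∑ j, (W i j - W' i j) ^ 2) with hs
  have hs0 : 0 ≤ s := Real.sqrt_nonneg _
  set f := fun U : Matrix.orthogonalGroup (Fin N) ℝ => θ * (N : ℝ) *
      (((U : Matrix (Fin N) (Fin N) ℝ) * E₁ * star (U : Matrix (Fin N) (Fin N) ℝ)) 0 0) with hf
  set g := fun U : Matrix.orthogonalGroup (Fin N) ℝ => θ * (N : ℝ) *
      (((U : Matrix (Fin N) (Fin N) ℝ) * E₂ * star (U : Matrix (Fin N) (Fin N) ℝ)) 0 0) with hg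
  have hNpos : (0 : ℝ) < (N : ℝ) := by
    exact_mod_cast Nat.pos_of_ne_zero (NeZero.ne N)
  -- entrywise bounds for rows
  have hrow : ∀ (U : Matrix.orthogonalGroup (Fin N) ℝ) (j : Fin N),
      |(U : Matrix (Fin N) (Fin N) ℝ) 0 j| ≤ 1 := by
    intro U j
    have h1 : ((U : Matrix (Fin N) (Fin N) ℝ) 0 j) ^ 2 ≤ 1 := by
      rw [← aux_row_unit U]
      exact Finset.single_le_sum (f := fun i => ((U : Matrix (Fin N) (Fin N) ℝ) 0 i) ^ 2)
        (fun i _ => sq_nonneg _) (Finset.mem_univ j)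
    exact (sq_le_one_iff_abs_le_one _).mp h1
  -- integrability
  have hint : ∀ E : Matrix (Fin N) (Fin N) ℝ,
      Integrable (fun U : Matrix.orthogonalGroup (Fin N) ℝ => Real.exp (θ * (N : ℝ) *
        (((U : Matrix (Fin N) (Fin N) ℝ) * E * star (U : Matrix (Fin N) (Fin N) ℝ)) 0 0))) m := by
    intro E
    refine aux_integrable_exp m _ ((aux_measurable_entry E).const_mul _)
      (θ * (N : ℝ) * ∑ j, ∑ k, |E j k|) fun U => ?_
    rw [abs_mul, abs_of_pos (by positivity : (0:ℝ) < θ * (N : ℝ))]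
    refine mul_le_mul_of_nonneg_left ?_ (by positivity)
    rw [aux_quad_entry]
    exact aux_quad_bound E _ (hrow U)
  -- pointwise Lipschitz bound
  have hpt : ∀ U : Matrix.orthogonalGroup (Fin N) ℝ,
      |f U - g U| ≤ θ * (N : ℝ) * (2 * b * s) := by
    intro U
    set v := (U : Matrix (Fin N) (Fin N) ℝ) 0 with hv
    have hv1 : ∑ i, v i ^ 2 = 1 := aux_row_unit U
    have hdiff : f U - g U = θ * (N : ℝ) * (v ⬝ᵥ ((W * B * Wᵀ - W' * B * W'ᵀ) *ᵥ v)) := by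
      have hEE : E₁ - E₂ = W * B * Wᵀ - W' * B * W'ᵀ := by
        rw [hE₁, hE₂]; abel
      rw [hf, hg]
      simp only [aux_quad_entry, ← hv]
      rw [← mul_sub, ← dotProduct_sub, ← Matrix.sub_mulVec, hEE]
    rw [hdiff, abs_mul, abs_of_pos (by positivity : (0:ℝ) < θ * (N : ℝ))]
    exact mul_le_mul_of_nonneg_left
      (aux_key_bound b hb B W W' hBnorm hW hW' v hv1) (by positivity)
  have hlog : |Real.log (∫ U, Real.exp (f U) ∂m) - Real.log (∫ U, Real.exp (g U) ∂m)|
      ≤ θ * (N : ℝ) * (2 * b * s) :=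
    aux_log_integral_exp m f g (hint E₁) (hint E₂) _ hpt
  rw [← mul_sub, abs_mul, abs_of_pos (by positivity : (0:ℝ) < 1 / (N : ℝ))]
  calc (1 / (N : ℝ)) * |Real.log (∫ U, Real.exp (f U) ∂m)
          - Real.log (∫ U, Real.exp (g U) ∂m)|
      ≤ (1 / (N : ℝ)) * (θ * (N : ℝ) * (2 * b * s)) :=
        mul_le_mul_of_nonneg_left hlog (by positivity)
    _ = 2 * θ * b * s := by field_simp
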